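/- The map φ sending a monomial x_{F_1}^{a_1}···x_{F_ℓ}^{a_ℓ} in the Feichtner–Yuzvinsky basis FY(B_n) of the Boolean matroid to the marked sequence (α, f) with α_i = j if i ∈ F_j \ F_{j−1} and α_i = 0 if i ∉ F_ℓ, and f(j) = a_j, is a bijection from FY(B_n) to the set Code_n of Stembridge codes of length n; moreover the degree a_1 + ··· + a_ℓ of the monomial equals the index f(1) + ··· + f(ℓ) of the code, and φ is equivariant with respect to the natural actions of the symmetric group S_n permuting ground-set elements. -/

import Mathlib

open scoped Classical

/-- The maximum value appearing in the sequence `α`. -/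
def codeMax {n : ℕ} (α : Fin n → ℕ) : ℕ := Finset.univ.sup α

/-- `(α, f)` is a Stembridge code of length `n`. -/
def IsStembridgeCode (n : ℕ) (α : Fin n → ℕ) (f : ℕ → ℕ) : Prop :=
  (∀ k, 1 ≤ k → k ≤ codeMax α →
      1 ≤ f k ∧ f k + 1 ≤ (Finset.univ.filter (fun i => α i = k)).card) ∧
  (∀ k, k = 0 ∨ codeMax α < k → f k = 0)

/-- The index of a Stembridge code: the sum of the marks. -/
def codeIndex {n : ℕ} (α : Fin n → ℕ) (f : ℕ → ℕ) : ℕ :=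
  ∑ k ∈ Finset.Icc 1 (codeMax α), f k

/-- An element `x_{F_1}^{a_1} ⋯ x_{F_ℓ}^{a_ℓ}` of the Feichtner–Yuzvinsky basis
`FY(B_n)` of the Chow ring of the Boolean matroid: a chain
`∅ = F_0 ⊊ F_1 ⊊ ⋯ ⊊ F_ℓ ⊆ [n]` together with exponents satisfying
`1 ≤ a_i ≤ |F_i| - |F_{i-1}| - 1`. -/
structure FYMonomial (n : ℕ) where
  len : ℕ
  F : Fin len → Finset (Fin n)
  a : Fin len → ℕ
  chain : ∀ i j : Fin len, i < j → F i ⊂ F j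
  a_pos : ∀ i : Fin len, 1 ≤ a i
  a_le_first : ∀ i : Fin len, (i : ℕ) = 0 → a i + 1 ≤ (F i).card
  a_le : ∀ i : Fin len, 0 < (i : ℕ) →
    a i + (F ⟨(i : ℕ) - 1, lt_of_le_of_lt (Nat.sub_le _ _) i.isLt⟩).card + 1 ≤ (F i).card

/-- The degree of an FY-basis monomial. -/
def FYdeg {n : ℕ} (m : FYMonomial n) : ℕ := ∑ i, m.a i

/-- The map `φ : FY(B_n) → Code_n`: `α_i = j` if `i ∈ F_j \ F_{j-1}` (so `α_i`
is one more than the number of sets of the chain not containing `i`),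
`α_i = 0` if `i` is in no `F_j`, and `f j = a_j`. -/
def phiFY {n : ℕ} (m : FYMonomial n) : (Fin n → ℕ) × (ℕ → ℕ) :=
  (fun i => if ∃ j, i ∈ m.F j then
      (Finset.univ.filter (fun j => i ∉ m.F j)).card + 1 else 0,
   fun k => if h : 1 ≤ k ∧ k ≤ m.len then m.a ⟨k - 1, by omega⟩ else 0)

/-- The action of `σ ∈ S_n` on an FY-basis monomial, replacing each `F_i` by
its image `σ(F_i)`. -/
def permFY {n : ℕ} (σ : Equiv.Perm (Fin n)) (m : FYMonomial n) : FYMonomial n where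
  len := m.len
  F := fun j => (m.F j).map σ.toEmbedding
  a := m.a
  chain := fun i j hij => Finset.map_ssubset_map.mpr (m.chain i j hij)
  a_pos := m.a_pos
  a_le_first := fun i hi => by simpa using m.a_le_first i hi
  a_le := fun i hi => by simpa using m.a_le i hi

/-- The action of `σ ∈ S_n` on marked sequences, permuting the positions of
`α`. -/
def permCode {n : ℕ} (σ : Equiv.Perm (Fin n)) (p : (Fin n → ℕ) × (ℕ → ℕ)) :
    (Fin n → ℕ) × (ℕ → ℕ) :=
  (fun i => p.1 (σ⁻¹ i), p.2)


theorem downclosed_mem_iff (T : Finset ℕ) (h : ∀ a ∈ T, ∀ b, b ≤ a → b ∈ T) (a : ℕ) :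
    a ∈ T ↔ a < T.card := by
  constructor
  · intro ha
    have hsub : Finset.range (a + 1) ⊆ T := by
      intro b hb
      exact h a ha b (Nat.lt_succ_iff.mp (Finset.mem_range.mp hb))
    have := Finset.card_le_card hsub
    simpa using this
  · intro ha
    by_contra hb
    have hsub : T ⊆ Finset.range a := by
      intro x hx
      rw [Finset.mem_range]
      rcases lt_or_ge x a with h' | h'
      · exact h'
      · exact absurd (h x hx a h') hb
    have := Finset.card_le_card hsub
    simp only [Finset.card_range] at this
    omega

theorem card_filter_val_lt (M t : ℕ) (ht : t ≤ M) :
    (Finset.univ.filter (fun j : Fin M => (j : ℕ) < t)).card = t := by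
  rcases eq_or_lt_of_le ht with h | ht'
  · have he : (Finset.univ.filter (fun j : Fin M => (j : ℕ) < t)) = Finset.univ := by
      apply Finset.filter_true_of_mem; intro j _; exact h ▸ j.isLt
    simp [he, h]
  · have he : (Finset.univ.filter (fun j : Fin M => (j : ℕ) < t)) = Finset.Iio ⟨t, ht'⟩ := by
      ext j; simp [Fin.lt_def]
    rw [he, Fin.card_Iio]

namespace FYaux
variable {n : ℕ}

theorem mem_mono (m : FYMonomial n) {i : Fin n} {j j' : Fin m.len} (h : j ≤ j')
    (hi : i ∈ m.F j) : i ∈ m.F j' := by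
  rcases eq_or_lt_of_le h with rfl | h'
  · exact hi
  · exact (m.chain j j' h').subset hi

/-- the number of sets of the chain not containing `i` -/
noncomputable def c (m : FYMonomial n) (i : Fin n) : ℕ :=
  (Finset.univ.filter (fun j => i ∉ m.F j)).card

theorem c_le_len (m : FYMonomial n) (i : Fin n) : c m i ≤ m.len :=
  le_trans (Finset.card_filter_le _ _) (by simp)

theorem mem_F_iff (m : FYMonomial n) (i : Fin n) (j : Fin m.len) :
    i ∈ m.F j ↔ c m i ≤ (j : ℕ) := by
  set S := Finset.univ.filter (fun j => i ∉ m.F j) with hS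
  set T := S.image Fin.val with hT
  have hcard : T.card = S.card := Finset.card_image_of_injective _ Fin.val_injective
  have hdc : ∀ a ∈ T, ∀ b, b ≤ a → b ∈ T := by
    intro a ha b hb
    simp only [hT, Finset.mem_image] at ha ⊢
    obtain ⟨j', hj', rfl⟩ := ha
    refine ⟨⟨b, lt_of_le_of_lt hb j'.isLt⟩, ?_, rfl⟩
    simp only [hS, Finset.mem_filter, Finset.mem_univ, true_and] at hj' ⊢
    intro hmem
    exact hj' (mem_mono m (by simpa [Fin.le_def] using hb) hmem)
  have key : ∀ j : Fin m.len, j ∈ S ↔ (j : ℕ) < S.card := by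
    intro j
    rw [← hcard, ← downclosed_mem_iff T hdc]
    simp only [hT, Finset.mem_image]
    constructor
    · intro h; exact ⟨j, h, rfl⟩
    · rintro ⟨x, hx, hxj⟩
      rwa [show x = j from Fin.val_injective hxj] at hx
  have hj : i ∈ m.F j ↔ j ∉ S := by simp [hS]
  rw [hj, key]
  unfold c
  rw [← hS]
  omega

theorem exists_mem_iff (m : FYMonomial n) (i : Fin n) :
    (∃ j, i ∈ m.F j) ↔ c m i < m.len := by
  constructor
  · rintro ⟨j, hj⟩
    exact lt_of_le_of_lt ((mem_F_iff m i j).mp hj) j.isLt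
  · intro h
    exact ⟨⟨c m i, h⟩, (mem_F_iff m i _).mpr (le_refl _)⟩

theorem alpha_eq (m : FYMonomial n) (i : Fin n) :
    (phiFY m).1 i = if c m i < m.len then c m i + 1 else 0 := by
  simp only [phiFY]
  by_cases h : ∃ j, i ∈ m.F j
  · rw [if_pos h, if_pos ((exists_mem_iff m i).mp h)]
    rfl
  · rw [if_neg h, if_neg (fun h' => h ((exists_mem_iff m i).mpr h'))]

end FYaux

namespace FYaux
variable {n : ℕ}

theorem alpha_le (m : FYMonomial n) (i : Fin n) : (phiFY m).1 i ≤ m.len := by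
  rw [alpha_eq]; split_ifs with h <;> omega

theorem alpha_eq_succ_iff (m : FYMonomial n) (i : Fin n) (t : ℕ) (ht : t < m.len) :
    (phiFY m).1 i = t + 1 ↔ c m i = t := by
  rw [alpha_eq]; split_ifs with h
  · omega
  · simp only [false_iff]
    omega

theorem filter_alpha_card (m : FYMonomial n) (t : Fin m.len) :
    m.a t + 1 ≤ (Finset.univ.filter (fun i => (phiFY m).1 i = (t : ℕ) + 1)).card := by
  have hfe : Finset.univ.filter (fun i => (phiFY m).1 i = (t : ℕ) + 1) =
      Finset.univ.filter (fun i => c m i = (t : ℕ)) := by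
    apply Finset.filter_congr
    intro i _
    exact alpha_eq_succ_iff m i t t.isLt
  rw [hfe]
  rcases Nat.eq_zero_or_pos (t : ℕ) with ht0 | ht0
  · have hset : Finset.univ.filter (fun i => c m i = (t : ℕ)) = m.F t := by
      ext i
      simp only [Finset.mem_filter, Finset.mem_univ, true_and, mem_F_iff m i t, ht0]
      omega
    rw [hset]
    exact m.a_le_first t ht0
  · set t' : Fin m.len := ⟨(t : ℕ) - 1, lt_of_le_of_lt (Nat.sub_le _ _) t.isLt⟩ with ht'
    have htv' : (t' : ℕ) = (t : ℕ) - 1 := rfl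
    have hsub : m.F t' ⊆ m.F t :=
      (m.chain t' t (by rw [Fin.lt_def]; omega)).subset
    have hset : Finset.univ.filter (fun i => c m i = (t : ℕ)) = m.F t \ m.F t' := by
      ext i
      simp only [Finset.mem_filter, Finset.mem_univ, true_and, Finset.mem_sdiff,
        mem_F_iff m i t, mem_F_iff m i t', ht']
      rw [← ht', mem_F_iff m i t']
      omega
    rw [hset, Finset.card_sdiff_of_subset hsub]
    have h1 := m.a_le t ht0
    have h2 := Finset.card_le_card hsub
    rw [← ht'] at h1
    omega

theorem codeMax_eq (m : FYMonomial n) : codeMax (phiFY m).1 = m.len := by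
  apply le_antisymm
  · exact Finset.sup_le fun i _ => alpha_le m i
  · rcases Nat.eq_zero_or_pos m.len with h | h
    · omega
    · set t : Fin m.len := ⟨m.len - 1, by omega⟩ with ht
      have hcard := filter_alpha_card m t
      have hpos := m.a_pos t
      have hne : (Finset.univ.filter (fun i => (phiFY m).1 i = (t : ℕ) + 1)).Nonempty := by
        rw [← Finset.card_pos]; omega
      obtain ⟨i, hi⟩ := hne
      simp only [Finset.mem_filter] at hi
      have htv : (t : ℕ) = m.len - 1 := rfl
      have : (phiFY m).1 i = m.len := by rw [hi.2]; omega
      calc m.len = (phiFY m).1 i := this.symm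
        _ ≤ codeMax (phiFY m).1 := Finset.le_sup (Finset.mem_univ i)

theorem isCode (m : FYMonomial n) : IsStembridgeCode n (phiFY m).1 (phiFY m).2 := by
  constructor
  · intro k hk1 hk2
    rw [codeMax_eq] at hk2
    set t : Fin m.len := ⟨k - 1, by omega⟩ with ht
    have hval : (phiFY m).2 k = m.a t := by
      simp only [phiFY]
      rw [dif_pos ⟨hk1, hk2⟩]
    constructor
    · rw [hval]; exact m.a_pos t
    · rw [hval]
      have := filter_alpha_card m t
      have hkt : (t : ℕ) + 1 = k := by
        have : (t : ℕ) = k - 1 := rfl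
        omega
      rwa [hkt] at this
  · intro k hk
    rw [codeMax_eq] at hk
    simp only [phiFY]
    rw [dif_neg]
    omega

theorem deg_eq (m : FYMonomial n) : FYdeg m = codeIndex (phiFY m).1 (phiFY m).2 := by
  unfold FYdeg codeIndex
  rw [codeMax_eq]
  have hIcc : Finset.Icc 1 m.len = (Finset.range m.len).image (· + 1) := by
    ext x; simp only [Finset.mem_Icc, Finset.mem_image, Finset.mem_range]
    constructor
    · intro h; exact ⟨x - 1, by omega, by omega⟩
    · rintro ⟨y, hy, rfl⟩; omega
  rw [hIcc, Finset.sum_image (by intro a _ b _ h; simp only at h; omega)]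
  rw [← Fin.sum_univ_eq_sum_range (fun j => (phiFY m).2 (j + 1)) m.len]
  apply Finset.sum_congr rfl
  intro i _
  simp only [phiFY]
  rw [dif_pos ⟨by omega, by have := i.isLt; omega⟩]
  apply congrArg
  apply Fin.ext
  simp

end FYaux

namespace FYaux
variable {n : ℕ}

theorem ext' {m₁ m₂ : FYMonomial n} (h : m₁.len = m₂.len)
    (hF : ∀ (j : ℕ) (hj : j < m₁.len), m₁.F ⟨j, hj⟩ = m₂.F ⟨j, h ▸ hj⟩)
    (ha : ∀ (j : ℕ) (hj : j < m₁.len), m₁.a ⟨j, hj⟩ = m₂.a ⟨j, h ▸ hj⟩) :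
    m₁ = m₂ := by
  obtain ⟨l₁, F₁, a₁, _, _, _, _⟩ := m₁
  obtain ⟨l₂, F₂, a₂, _, _, _, _⟩ := m₂
  dsimp at h hF ha
  subst h
  have hF' : F₁ = F₂ := funext fun j => by
    rcases j with ⟨j, hj⟩; exact hF j hj
  have ha' : a₁ = a₂ := funext fun j => by
    rcases j with ⟨j, hj⟩; exact ha j hj
  subst hF'; subst ha'
  rfl

theorem code_occurs {α : Fin n → ℕ} {f : ℕ → ℕ} (h : IsStembridgeCode n α f)
    {k : ℕ} (hk1 : 1 ≤ k) (hk2 : k ≤ codeMax α) : ∃ i, α i = k := by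
  obtain ⟨h1, h2⟩ := h.1 k hk1 hk2
  have : (Finset.univ.filter (fun i => α i = k)).Nonempty := by
    rw [← Finset.card_pos]; omega
  obtain ⟨i, hi⟩ := this
  simp only [Finset.mem_filter] at hi
  exact ⟨i, hi.2⟩

/-- The inverse map, on Stembridge codes. -/
noncomputable def psiAux (α : Fin n → ℕ) (f : ℕ → ℕ) (h : IsStembridgeCode n α f) :
    FYMonomial n where
  len := codeMax α
  F := fun j => Finset.univ.filter (fun i => 1 ≤ α i ∧ α i ≤ (j : ℕ) + 1)
  a := fun j => f ((j : ℕ) + 1)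
  chain := by
    intro j j' hjj
    rw [Fin.lt_def] at hjj
    have hsub : Finset.univ.filter (fun i => 1 ≤ α i ∧ α i ≤ (j : ℕ) + 1) ⊆
        Finset.univ.filter (fun i => 1 ≤ α i ∧ α i ≤ (j' : ℕ) + 1) := by
      intro i hi
      simp only [Finset.mem_filter, Finset.mem_univ, true_and] at hi ⊢
      omega
    rw [Finset.ssubset_iff_of_subset hsub]
    obtain ⟨i, hi⟩ := code_occurs h (k := (j' : ℕ) + 1) (by omega)
      (by have := j'.isLt; omega)
    refine ⟨i, ?_, ?_⟩
    · simp only [Finset.mem_filter, Finset.mem_univ, true_and]; omega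
    · simp only [Finset.mem_filter, Finset.mem_univ, true_and]; push_neg; intro; omega
  a_pos := fun j => (h.1 ((j : ℕ) + 1) (by omega) (by have := j.isLt; omega)).1
  a_le_first := by
    intro j hj
    have hM : 0 < codeMax α := lt_of_le_of_lt (Nat.zero_le _) j.isLt
    have h1 := (h.1 1 le_rfl (by omega)).2
    have hset : Finset.univ.filter (fun i => 1 ≤ α i ∧ α i ≤ (j : ℕ) + 1) =
        Finset.univ.filter (fun i => α i = 1) := by
      ext i
      simp only [Finset.mem_filter, Finset.mem_univ, true_and, hj]
      omega
    rw [hset, show (j : ℕ) + 1 = 1 by omega]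
    exact h1
  a_le := by
    intro j hj
    have hjM := j.isLt
    have hc := (h.1 ((j : ℕ) + 1) (by omega) (by omega)).2
    set j' : Fin (codeMax α) := ⟨(j : ℕ) - 1, lt_of_le_of_lt (Nat.sub_le _ _) j.isLt⟩
      with hj'
    have htv : (j' : ℕ) = (j : ℕ) - 1 := rfl
    set A := Finset.univ.filter (fun i => 1 ≤ α i ∧ α i ≤ (j' : ℕ) + 1) with hA
    set B := Finset.univ.filter (fun i => 1 ≤ α i ∧ α i ≤ (j : ℕ) + 1) with hB
    have hsub : A ⊆ B := by
      intro i hi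
      simp only [hA, hB, Finset.mem_filter, Finset.mem_univ, true_and] at hi ⊢
      omega
    have hsd : B \ A = Finset.univ.filter (fun i => α i = (j : ℕ) + 1) := by
      ext i
      simp only [hA, hB, Finset.mem_sdiff, Finset.mem_filter, Finset.mem_univ, true_and]
      omega
    have hcard : B.card - A.card = (Finset.univ.filter (fun i => α i = (j : ℕ) + 1)).card := by
      rw [← hsd, Finset.card_sdiff_of_subset hsub]
    have hle := Finset.card_le_card hsub
    show f ((j : ℕ) + 1) + A.card + 1 ≤ B.card
    omega

theorem psi_phi (m : FYMonomial n) : psiAux (phiFY m).1 (phiFY m).2 (isCode m) = m := by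
  apply ext' (codeMax_eq m)
  · intro j hj
    have hj' : j < m.len := by rw [← codeMax_eq m]; exact hj
    show Finset.univ.filter
        (fun i => 1 ≤ (phiFY m).1 i ∧ (phiFY m).1 i ≤ ((⟨j, hj⟩ : Fin (codeMax (phiFY m).1)) : ℕ) + 1)
        = m.F ⟨j, _⟩
    ext i
    simp only [Finset.mem_filter, Finset.mem_univ, true_and, alpha_eq,
      mem_F_iff m i ⟨j, hj'⟩]
    show (1 ≤ (if c m i < m.len then c m i + 1 else 0) ∧
        (if c m i < m.len then c m i + 1 else 0) ≤ j + 1) ↔ c m i ≤ j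
    split_ifs with h <;> omega
  · intro j hj
    have hj' : j < m.len := by rw [← codeMax_eq m]; exact hj
    show (phiFY m).2 (((⟨j, hj⟩ : Fin (codeMax (phiFY m).1)) : ℕ) + 1) = m.a ⟨j, _⟩
    simp only [phiFY]
    rw [dif_pos ⟨by omega, by omega⟩]
    apply congrArg
    apply Fin.ext
    simp

theorem phi_psi (α : Fin n → ℕ) (f : ℕ → ℕ) (h : IsStembridgeCode n α f) :
    phiFY (psiAux α f h) = (α, f) := by
  set m := psiAux α f h with hm
  have hlen : m.len = codeMax α := rfl
  have hmF : ∀ (i : Fin n) (j : Fin m.len),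
      i ∈ m.F j ↔ (1 ≤ α i ∧ α i ≤ (j : ℕ) + 1) := by
    intro i j
    show i ∈ Finset.univ.filter (fun i => 1 ≤ α i ∧ α i ≤ (j : ℕ) + 1) ↔ _
    simp
  refine Prod.ext ?_ ?_
  · funext i
    show (phiFY m).1 i = α i
    rw [alpha_eq]
    have hαM : α i ≤ codeMax α := Finset.le_sup (Finset.mem_univ i)
    by_cases h0 : α i = 0
    · have hcall : c m i = m.len := by
        unfold c
        rw [Finset.filter_true_of_mem, Finset.card_univ, Fintype.card_fin]
        intro j _
        rw [hmF i j]
        omega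
      rw [if_neg (by omega)]
      omega
    · have hfe : Finset.univ.filter (fun j => i ∉ m.F j) =
          Finset.univ.filter (fun j : Fin m.len => (j : ℕ) < α i - 1) := by
        apply Finset.filter_congr
        intro j _
        rw [hmF i j]
        constructor
        · intro hc; push_neg at hc; omega
        · intro hc; push_neg; intro; omega
      have hcall : c m i = α i - 1 := by
        unfold c
        rw [hfe, card_filter_val_lt]
        rw [hlen]; omega
      rw [hcall, if_pos (by rw [hlen]; omega)]
      omega
  · funext k
    show (phiFY m).2 k = f k
    simp only [phiFY]
    by_cases hk : 1 ≤ k ∧ k ≤ m.len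
    · rw [dif_pos hk]
      show f ((k - 1) + 1) = f k
      congr 1
      omega
    · rw [dif_neg hk]
      symm
      apply h.2
      rw [hlen] at hk
      omega

/-- A total inverse of `phiFY`. -/
noncomputable def psi (p : (Fin n → ℕ) × (ℕ → ℕ)) : FYMonomial n :=
  if h : IsStembridgeCode n p.1 p.2 then psiAux p.1 p.2 h else
    ⟨0, Fin.elim0, Fin.elim0, fun i => i.elim0, fun i => i.elim0,
      fun i => i.elim0, fun i => i.elim0⟩

theorem psi_phi' (m : FYMonomial n) : psi (phiFY m) = m := by
  unfold psi
  rw [dif_pos (isCode m)]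
  exact psi_phi m

theorem equivariant (σ : Equiv.Perm (Fin n)) (m : FYMonomial n) :
    phiFY (permFY σ m) = permCode σ (phiFY m) := by
  unfold permCode
  refine Prod.ext ?_ rfl
  funext i
  show (phiFY (permFY σ m)).1 i = (phiFY m).1 (σ⁻¹ i)
  have hmem : ∀ j : Fin m.len, i ∈ (m.F j).map σ.toEmbedding ↔ σ⁻¹ i ∈ m.F j := by
    intro j
    rw [show σ.toEmbedding = σ.toEmbedding from rfl, Finset.mem_map_equiv]
    rfl
  simp only [phiFY, permFY]
  simp only [hmem]
  congr

end FYaux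

/-- `φ` is a bijection from `FY(B_n)` onto the set `Code_n` of Stembridge codes
of length `n`, the degree of a monomial equals the index of the corresponding
code, and `φ` is `S_n`-equivariant. -/
theorem phiFY_bijection (n : ℕ) :
    Set.BijOn (phiFY (n := n)) Set.univ
      {p : (Fin n → ℕ) × (ℕ → ℕ) | IsStembridgeCode n p.1 p.2} ∧
    (∀ m : FYMonomial n, FYdeg m = codeIndex (phiFY m).1 (phiFY m).2) ∧
    (∀ (σ : Equiv.Perm (Fin n)) (m : FYMonomial n),
      phiFY (permFY σ m) = permCode σ (phiFY m)) := by
  refine ⟨?_, FYaux.deg_eq, FYaux.equivariant⟩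
  refine Set.BijOn.mk ?_ ?_ ?_
  · intro m _
    exact FYaux.isCode m
  · intro m₁ _ m₂ _ h
    calc m₁ = FYaux.psi (phiFY m₁) := (FYaux.psi_phi' m₁).symm
      _ = FYaux.psi (phiFY m₂) := by rw [h]
      _ = m₂ := FYaux.psi_phi' m₂
  · intro p hp
    refine ⟨FYaux.psi p, Set.mem_univ _, ?_⟩
    unfold FYaux.psi
    have hp' : IsStembridgeCode n p.1 p.2 := hp
    rw [dif_pos hp']
    exact FYaux.phi_psi p.1 p.2 hp'
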